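/- The map φ is a surjective graph morphism from the Cayley graph of S_n (with edges given by adjacent transpositions) to the flip graph of triangulations of the (n+2)-gon: any edge of the Cayley graph is mapped either to a single vertex or to an edge of the flip graph. -/

import Mathlib

open scoped Classical

/-- `d` is a diagonal of the convex `(n+2)`-gon with vertices `0,…,n+1`
(in clockwise increasing order): it joins two nonadjacent vertices. -/
def IsDiagonal (n : ℕ) (d : ℕ × ℕ) : Prop :=
  d.1 < d.2 ∧ d.2 ≤ n + 1 ∧ d.2 ≠ d.1 + 1 ∧ ¬(d.1 = 0 ∧ d.2 = n + 1)

/-- Two diagonals of a convex polygon cross. -/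
def Crosses (d e : ℕ × ℕ) : Prop :=
  (d.1 < e.1 ∧ e.1 < d.2 ∧ d.2 < e.2) ∨ (e.1 < d.1 ∧ d.1 < e.2 ∧ e.2 < d.2)

/-- A triangulation of the convex `(n+2)`-gon: `n-1` pairwise noncrossing diagonals. -/
def IsTriangulation (n : ℕ) (D : Finset (ℕ × ℕ)) : Prop :=
  (∀ d ∈ D, IsDiagonal n d) ∧ (∀ d ∈ D, ∀ e ∈ D, ¬ Crosses d e) ∧ D.card = n - 1

/-- `{a,b}` (with `a<b`) is an edge of the triangulation `D`: a polygon side or a diagonal. -/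
def IsEdge (n : ℕ) (D : Finset (ℕ × ℕ)) (a b : ℕ) : Prop :=
  a < b ∧ b ≤ n + 1 ∧ (b = a + 1 ∨ (a = 0 ∧ b = n + 1) ∨ (a, b) ∈ D)

/-- `{a,b,c}` (with `a<b<c`) is a (triangular) face of the triangulation `D`. -/
def IsFace (n : ℕ) (D : Finset (ℕ × ℕ)) (a b c : ℕ) : Prop :=
  a < b ∧ b < c ∧ IsEdge n D a b ∧ IsEdge n D b c ∧ IsEdge n D a c

/-- An ear of a triangulation: a vertex incident to no diagonal. -/
def IsEar (n : ℕ) (D : Finset (ℕ × ℕ)) (v : ℕ) : Prop :=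
  v ≤ n + 1 ∧ ∀ d ∈ D, d.1 ≠ v ∧ d.2 ≠ v

/-- Degree of a vertex: number of edges (polygon sides and diagonals) incident to it. -/
noncomputable def degreeOf (n : ℕ) (D : Finset (ℕ × ℕ)) (v : ℕ) : ℕ :=
  ((Finset.range (n + 2)).filter (fun w => w ≠ v ∧ IsEdge n D (min v w) (max v w))).card

/-- The set of faces of a triangulation, as increasing triples. -/
noncomputable def facesSet (n : ℕ) (D : Finset (ℕ × ℕ)) : Finset (ℕ × ℕ × ℕ) :=
  (Finset.range (n + 2) ×ˢ Finset.range (n + 2) ×ˢ Finset.range (n + 2)).filter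
    (fun t => IsFace n D t.1 t.2.1 t.2.2)

/-- Predecessor of `v` in the vertex set `Y`. -/
def predIn (Y : Finset ℕ) (v : ℕ) : ℕ := WithBot.unbotD 0 (Y.filter (· < v)).max
/-- Successor of `v` in the vertex set `Y`. -/
def succIn (Y : Finset ℕ) (v : ℕ) : ℕ := WithTop.untopD 0 (Y.filter (v < ·)).min

/-- The iterative neighbor-joining construction: for each successive letter,
join its two current neighbors by a diagonal and delete the letter's vertex. -/
def phiAux : List ℕ → Finset ℕ → Finset (ℕ × ℕ)
  | [], _ => ∅
  | [_], _ => ∅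
  | v :: rest, Y => insert (predIn Y v, succIn Y v) (phiAux rest (Y.erase v))

/-- The map `φ` from permutations (standard words, letters `1,…,n`) to
triangulations of the `(n+2)`-gon with vertices `0,…,n+1`. -/
def phiT (n : ℕ) (l : List ℕ) : Finset (ℕ × ℕ) := phiAux l (Finset.range (n + 2))

/-- `t` is the third vertex of a face of `D` containing the polygon side `{i, i+1}`. -/
def FaceOnEdge (n : ℕ) (D : Finset (ℕ × ℕ)) (i t : ℕ) : Prop :=
  (t < i ∧ IsFace n D t i (i + 1)) ∨ (i + 1 < t ∧ IsFace n D i (i + 1) t)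

/-- `D` and `D'` differ by one diagonal flip, in the quadrilateral `a<b<c<d`. -/
def FlipAdj (n : ℕ) (D D' : Finset (ℕ × ℕ)) : Prop :=
  ∃ a b c d : ℕ, a < b ∧ b < c ∧ c < d ∧
    ((IsFace n D a b d ∧ IsFace n D b c d ∧ D' = insert (a, c) (D.erase (b, d))) ∨
     (IsFace n D a b c ∧ IsFace n D a c d ∧ D' = insert (b, d) (D.erase (a, c))))

/-- Sylvester adjacency: `u x z u' y u'' ~ u z x u' y u''` with `x ≤ y < z`. -/
def SylvAdj (w1 w2 : List ℕ) : Prop :=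
  ∃ (u u' u'' : List ℕ) (x y z : ℕ), x ≤ y ∧ y < z ∧
    w1 = u ++ x :: z :: (u' ++ y :: u'') ∧ w2 = u ++ z :: x :: (u' ++ y :: u'')

/-- Sylvester congruence: the equivalence relation generated by sylvester adjacency. -/
def SylvCong : List ℕ → List ℕ → Prop := Relation.EqvGen SylvAdj

/-- Standardization of a word: replace the occurrences of the smallest letter,
left to right, by `1, 2, …`, then continue with the next letter, etc. -/
def stdW (w : List ℕ) : List ℕ :=
  (List.range w.length).map (fun i =>
    (((List.range w.length).filter (fun j =>
      w.getD j 0 < w.getD i 0 ∨ (w.getD j 0 = w.getD i 0 ∧ j < i))).length) + 1)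

/-- Partial sums of an evaluation `μ`. -/
def Msum (μ : ℕ → ℕ) (s : ℕ) : ℕ := ∑ t ∈ Finset.range s, μ t

/-- The color (block index) of the vertex `i` for the increasing coloring `ε_μ`. -/
noncomputable def colOf (μ : ℕ → ℕ) (p i : ℕ) : ℕ :=
  ((Finset.range p).filter (fun s => Msum μ (s + 1) < i)).card

/-- `D`, colored by the increasing coloring `ε_μ`, is a simple colored triangulation. -/
def SimpleFor (n p : ℕ) (μ : ℕ → ℕ) (D : Finset (ℕ × ℕ)) : Prop :=
  IsTriangulation n D ∧
  (∀ d ∈ D, 1 ≤ d.1 → d.2 ≤ n → colOf μ p d.1 ≠ colOf μ p d.2) ∧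
  (∀ i t, 1 ≤ i → i + 1 ≤ n → colOf μ p i = colOf μ p (i + 1) →
    FaceOnEdge n D i t → t < i)

/-- Switched flip: a diagonal flip (preserving vertex colors) whose two adjacent
faces (with middle vertices `b` and `c`) have different colors. -/
def SwFlipAdj (n p : ℕ) (μ : ℕ → ℕ) (D D' : Finset (ℕ × ℕ)) : Prop :=
  ∃ a b c d : ℕ, a < b ∧ b < c ∧ c < d ∧ colOf μ p b ≠ colOf μ p c ∧
    ((IsFace n D a b d ∧ IsFace n D b c d ∧ D' = insert (a, c) (D.erase (b, d))) ∨
     (IsFace n D a b c ∧ IsFace n D a c d ∧ D' = insert (b, d) (D.erase (a, c))))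
-- predIn/succIn specs
lemma predIn_spec {Y : Finset ℕ} {v y0 : ℕ} (hy0 : y0 ∈ Y) (hlt : y0 < v) :
    predIn Y v ∈ Y ∧ predIn Y v < v ∧ ∀ y ∈ Y, y < v → y ≤ predIn Y v := by
  have hne : (Y.filter (· < v)).Nonempty := ⟨y0, Finset.mem_filter.2 ⟨hy0, hlt⟩⟩
  have hmax : (Y.filter (· < v)).max = ((Y.filter (· < v)).max' hne : ℕ) :=
    (Finset.coe_max' hne).symm
  have hp : predIn Y v = (Y.filter (· < v)).max' hne := by
    unfold predIn; rw [hmax]; rfl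
  have hmem := (Y.filter (· < v)).max'_mem hne
  rw [Finset.mem_filter] at hmem
  refine ⟨by rw [hp]; exact hmem.1, by rw [hp]; exact hmem.2, ?_⟩
  intro y hy hyv
  rw [hp]
  exact Finset.le_max' (Y.filter (· < v)) y (Finset.mem_filter.2 ⟨hy, hyv⟩)

lemma succIn_spec {Y : Finset ℕ} {v y0 : ℕ} (hy0 : y0 ∈ Y) (hlt : v < y0) :
    succIn Y v ∈ Y ∧ v < succIn Y v ∧ ∀ y ∈ Y, v < y → succIn Y v ≤ y := by
  have hne : (Y.filter (v < ·)).Nonempty := ⟨y0, Finset.mem_filter.2 ⟨hy0, hlt⟩⟩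
  have hmin : (Y.filter (v < ·)).min = ((Y.filter (v < ·)).min' hne : ℕ) :=
    (Finset.coe_min' hne).symm
  have hp : succIn Y v = (Y.filter (v < ·)).min' hne := by
    unfold succIn; rw [hmin]; rfl
  have hmem := (Y.filter (v < ·)).min'_mem hne
  rw [Finset.mem_filter] at hmem
  refine ⟨by rw [hp]; exact hmem.1, by rw [hp]; exact hmem.2, ?_⟩
  intro y hy hyv
  rw [hp]
  exact Finset.min'_le (Y.filter (v < ·)) y (Finset.mem_filter.2 ⟨hy, hyv⟩)

/-- the auxiliary accumulation (like `phiAux` but also records the last letter's diagonal) -/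
def phiG : List ℕ → Finset ℕ → Finset (ℕ × ℕ)
  | [], _ => ∅
  | v :: r, Y => insert (predIn Y v, succIn Y v) (phiG r (Y.erase v))

lemma erases_eq (u : List ℕ) : ∀ Y : Finset ℕ, u.foldl Finset.erase Y = Y \ u.toFinset := by
  induction u with
  | nil => intro Y; simp
  | cons v r ih =>
    intro Y
    rw [List.foldl_cons, ih]
    ext y
    simp [Finset.mem_erase, Finset.mem_sdiff]
    tauto

lemma phiG_split (u : List ℕ) : ∀ (m : List ℕ) (Y : Finset ℕ),
    phiG (u ++ m) Y = phiG u Y ∪ phiG m (u.foldl Finset.erase Y) := by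
  induction u with
  | nil => intro m Y; simp [phiG]
  | cons v r ih =>
    intro m Y
    rw [List.cons_append]
    show insert _ (phiG (r ++ m) (Y.erase v)) = insert _ (phiG r (Y.erase v)) ∪ _
    rw [ih, List.foldl_cons, Finset.insert_union]

lemma phiAux_eq_phiG (l : List ℕ) : ∀ Y, phiAux l Y = phiG l.dropLast Y := by
  induction l with
  | nil => intro Y; rfl
  | cons v r ih =>
    intro Y
    cases r with
    | nil => rfl
    | cons w r' =>
      show phiAux (v :: w :: r') Y = _
      rw [show phiAux (v :: w :: r') Y =
        insert (predIn Y v, succIn Y v) (phiAux (w :: r') (Y.erase v)) from rfl]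
      rw [ih]
      rfl

/-- Precondition for processing letters `u` from vertex set `Y`. -/
def Pre (n : ℕ) (u : List ℕ) (Y : Finset ℕ) : Prop :=
  u.Nodup ∧ (∀ v ∈ u, v ∈ Y ∧ 1 ≤ v ∧ v ≤ n) ∧ 0 ∈ Y ∧ (n+1) ∈ Y ∧
    Y ⊆ Finset.range (n+2) ∧ ∃ m, m ∉ u ∧ 1 ≤ m ∧ m ≤ n ∧ m ∈ Y

lemma Pre.tail {n : ℕ} {v : ℕ} {u : List ℕ} {Y : Finset ℕ} (h : Pre n (v :: u) Y) :
    Pre n u (Y.erase v) := by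
  obtain ⟨hnd, hmem, h0, hN, hsub, m, hm⟩ := h
  have hv := hmem v (by simp)
  refine ⟨hnd.of_cons, ?_, ?_, ?_, ?_, m, ?_⟩
  · intro w hw
    have := hmem w (by simp [hw])
    refine ⟨Finset.mem_erase.2 ⟨?_, this.1⟩, this.2⟩
    rintro rfl
    exact (List.nodup_cons.1 hnd).1 hw
  · exact Finset.mem_erase.2 ⟨by omega, h0⟩
  · exact Finset.mem_erase.2 ⟨by omega, hN⟩
  · exact fun y hy => hsub (Finset.mem_of_mem_erase hy)
  · refine ⟨fun hc => hm.1 (by simp [hc]), hm.2.1, hm.2.2.1,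
      Finset.mem_erase.2 ⟨fun hc => hm.1 (by simp [hc]), hm.2.2.2⟩⟩

lemma phiG_props (n : ℕ) : ∀ (u : List ℕ) (Y : Finset ℕ), Pre n u Y →
    (∀ d ∈ phiG u Y, d.1 ∈ Y ∧ d.2 ∈ Y ∧ d.1 < d.2 ∧
      (∃ y ∈ Y, y ∉ u.foldl Finset.erase Y ∧ d.1 < y ∧ y < d.2) ∧
      (∀ y ∈ u.foldl Finset.erase Y, ¬(d.1 < y ∧ y < d.2)) ∧
      ¬(d.1 = 0 ∧ d.2 = n+1)) ∧
    (∀ d ∈ phiG u Y, ∀ e ∈ phiG u Y, ¬ Crosses d e) ∧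
    (phiG u Y).card = u.length := by
  intro u
  induction u with
  | nil =>
    intro Y _
    refine ⟨?_, ?_, ?_⟩ <;> simp [phiG, Crosses]
  | cons v r ih =>
    intro Y hPre
    obtain ⟨hnd, hmem, h0, hN, hsub, m, hm⟩ := hPre
    have hv := hmem v (by simp)
    have hps := predIn_spec h0 (by omega : (0:ℕ) < v)
    have hss := succIn_spec hN (by omega : v < n+1)
    set p := predIn Y v with hpdef
    set s := succIn Y v with hsdef
    have hYsub' : Y.erase v ⊆ Y := Finset.erase_subset v Y
    have hPre' : Pre n r (Y.erase v) := Pre.tail ⟨hnd, hmem, h0, hN, hsub, m, hm⟩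
    obtain ⟨IH1, IH2, IH3⟩ := ih (Y.erase v) hPre'
    -- the erased-down vertex set
    set Z := r.foldl Finset.erase (Y.erase v) with hZdef
    have hZsub : Z ⊆ Y.erase v := by
      rw [hZdef, erases_eq]; exact fun y hy => (Finset.mem_sdiff.1 hy).1
    have hZY : (v :: r).foldl Finset.erase Y = Z := by rw [List.foldl_cons]
    -- key gap fact
    have hgap : ∀ y ∈ Y, p < y → y < s → y = v := by
      intro y hy h1 h2
      by_contra hne
      rcases lt_trichotomy y v with h | h | h
      · have := hps.2.2 y hy h; omega
      · exact hne h
      · have := hss.2.2 y hy h; omega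
    have hgap' : ∀ y ∈ Y.erase v, ¬(p < y ∧ y < s) := by
      intro y hy ⟨h1, h2⟩
      have := hgap y (Finset.mem_of_mem_erase hy) h1 h2
      exact (Finset.mem_erase.1 hy).1 this
    have hGrec : phiG (v :: r) Y = insert (p, s) (phiG r (Y.erase v)) := rfl
    have hnotmem : (p, s) ∉ phiG r (Y.erase v) := by
      intro hc
      obtain ⟨_, _, _, ⟨y, hy, _, hy1, hy2⟩, _, _⟩ := IH1 _ hc
      exact hgap' y hy ⟨hy1, hy2⟩
    constructor
    · intro d hd
      rw [hGrec, Finset.mem_insert] at hd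
      rcases hd with rfl | hd
      · refine ⟨hps.1, hss.1, by dsimp; omega, ⟨v, hv.1, ?_, by dsimp; omega, by dsimp; omega⟩, ?_, ?_⟩
        · rw [hZY]; intro hc; exact (Finset.mem_erase.1 (hZsub hc)).1 rfl
        · rw [hZY]; intro y hy ⟨h1, h2⟩; exact hgap' y (hZsub hy) ⟨h1, h2⟩
        · rintro ⟨hp0, hsN⟩
          have := hgap m hm.2.2.2 (by dsimp at hp0; omega) (by dsimp at hsN; omega)
          exact hm.1 (by simp [this])
      · obtain ⟨h1, h2, h3, ⟨y, hy, hyZ, hy1, hy2⟩, h5, h6⟩ := IH1 _ hd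
        exact ⟨hYsub' h1, hYsub' h2, h3, ⟨y, hYsub' hy, by rw [hZY]; exact hyZ, hy1, hy2⟩,
          by rw [hZY]; exact h5, h6⟩
    constructor
    · intro d hd e he
      rw [hGrec, Finset.mem_insert] at hd he
      rcases hd with rfl | hd <;> rcases he with rfl | he
      · rintro (⟨h1, _, _⟩ | ⟨h1, _, _⟩) <;> exact absurd h1 (lt_irrefl _)
      · obtain ⟨he1, he2, _, _, _, _⟩ := IH1 _ he
        rintro (⟨h1, h2, h3⟩ | ⟨h1, h2, h3⟩)
        · exact hgap' e.1 he1 ⟨h1, by dsimp at *; omega⟩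
        · exact hgap' e.2 he2 ⟨by dsimp at *; omega, h3⟩
      · obtain ⟨he1, he2, _, _, _, _⟩ := IH1 _ hd
        rintro (⟨h1, h2, h3⟩ | ⟨h1, h2, h3⟩)
        · exact hgap' d.2 he2 ⟨by dsimp at *; omega, h3⟩
        · exact hgap' d.1 he1 ⟨h1, by dsimp at *; omega⟩
      · exact IH2 _ hd _ he
    · rw [hGrec, Finset.card_insert_of_notMem hnotmem, IH3]; rfl

lemma phiG_adj : ∀ (u : List ℕ) (Y : Finset ℕ) (p q : ℕ),
    p ∈ u.foldl Finset.erase Y → q ∈ u.foldl Finset.erase Y → p < q →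
    (∀ y ∈ u.foldl Finset.erase Y, ¬(p < y ∧ y < q)) →
    (∀ y ∈ Y, ¬(p < y ∧ y < q)) ∨ (p, q) ∈ phiG u Y := by
  intro u
  induction u with
  | nil => intro Y p q hp hq _ hgap; exact Or.inl hgap
  | cons v r ih =>
    intro Y p q hp hq hpq hgap
    rw [List.foldl_cons] at hp hq hgap
    have hsub : r.foldl Finset.erase (Y.erase v) ⊆ Y.erase v := by
      rw [erases_eq]; exact fun y hy => (Finset.mem_sdiff.1 hy).1
    rcases ih (Y.erase v) p q hp hq hpq hgap with hadj | hmem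
    · by_cases hY : ∀ y ∈ Y, ¬(p < y ∧ y < q)
      · exact Or.inl hY
      · push_neg at hY
        obtain ⟨y, hy, h1, h2⟩ := hY
        have hyv : y = v := by
          by_contra hne
          exact hadj y (Finset.mem_erase.2 ⟨hne, hy⟩) ⟨h1, h2⟩
        subst hyv
        have hpY : p ∈ Y := Finset.mem_of_mem_erase (hsub hp)
        have hqY : q ∈ Y := Finset.mem_of_mem_erase (hsub hq)
        have hps := predIn_spec hpY h1
        have hss := succIn_spec hqY h2
        have hpeq : predIn Y y = p := by
          rcases lt_or_eq_of_le (hps.2.2 p hpY h1) with hlt | heq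
          · exfalso
            refine hadj (predIn Y y) (Finset.mem_erase.2 ⟨by omega, hps.1⟩) ⟨hlt, ?_⟩
            omega
          · omega
        have hseq : succIn Y y = q := by
          rcases lt_or_eq_of_le (hss.2.2 q hqY h2) with hlt | heq
          · exfalso
            refine hadj (succIn Y y) (Finset.mem_erase.2 ⟨by omega, hss.1⟩) ⟨?_, hlt⟩
            omega
          · omega
        right
        show (p, q) ∈ insert (predIn Y y, succIn Y y) (phiG r (Y.erase y))
        rw [hpeq, hseq]
        exact Finset.mem_insert_self _ _
    · exact Or.inr (Finset.mem_insert_of_mem hmem)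

/-- A valid noncrossing diagonal family on vertex set `Y`. -/
def ValidD (n : ℕ) (Y : Finset ℕ) (D : Finset (ℕ × ℕ)) : Prop :=
  (∀ d ∈ D, d.1 ∈ Y ∧ d.2 ∈ Y ∧ d.1 < d.2 ∧ (∃ y ∈ Y, d.1 < y ∧ y < d.2) ∧
    ¬(d.1 = 0 ∧ d.2 = n+1)) ∧ (∀ d ∈ D, ∀ e ∈ D, ¬ Crosses d e)

/-- Core step: minimal diagonal, its interior, and the reduced configuration. -/
lemma min_diag_step {n : ℕ} {Y : Finset ℕ} {D : Finset (ℕ × ℕ)}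
    (h0 : 0 ∈ Y) (hN : (n+1) ∈ Y) (hYr : Y ⊆ Finset.range (n+2))
    (hV : ValidD n Y D) (hne : D.Nonempty) :
    ∃ d0 ∈ D, ∃ I : Finset ℕ,
      I = Y.filter (fun y => d0.1 < y ∧ y < d0.2) ∧ I.Nonempty ∧
      (∀ e ∈ D, e.1 ∉ I ∧ e.2 ∉ I) ∧
      ValidD n (Y \ I) (D.erase d0) ∧ 0 ∈ Y \ I ∧ (n+1) ∈ Y \ I ∧
      (Y \ I) ⊆ Finset.range (n+2) ∧ 4 ≤ Y.card ∧
      (Y \ I).card + I.card = Y.card := by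
  obtain ⟨hV1, hV2⟩ := hV
  set f : ℕ × ℕ → ℕ := fun d => (Y.filter (fun y => d.1 < y ∧ y < d.2)).card with hf
  obtain ⟨d0, hd0, hmin⟩ := Finset.exists_min_image D f hne
  set I := Y.filter (fun y => d0.1 < y ∧ y < d0.2) with hI
  obtain ⟨hd1Y, hd2Y, hd12, ⟨w, hwY, hw1, hw2⟩, hd0N⟩ := hV1 d0 hd0
  have hwI : w ∈ I := Finset.mem_filter.2 ⟨hwY, hw1, hw2⟩
  have hIne : I.Nonempty := ⟨w, hwI⟩
  -- no endpoint in I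
  have hend : ∀ e ∈ D, e.1 ∉ I ∧ e.2 ∉ I := by
    intro e he
    obtain ⟨he1Y, he2Y, he12, _, _⟩ := hV1 e he
    constructor
    · intro hc
      rw [hI, Finset.mem_filter] at hc
      obtain ⟨_, hc1, hc2⟩ := hc
      -- e does not cross d0, so e.2 ≤ d0.2
      have hnc := hV2 d0 hd0 e he
      have he2 : e.2 ≤ d0.2 := by
        by_contra hgt
        exact hnc (Or.inl ⟨hc1, hc2, by omega⟩)
      -- then f e < f d0
      have hsub : Y.filter (fun y => e.1 < y ∧ y < e.2) ⊆ I.erase e.1 := by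
        intro y hy
        rw [Finset.mem_filter] at hy
        refine Finset.mem_erase.2 ⟨by omega, Finset.mem_filter.2 ⟨hy.1, by omega, by omega⟩⟩
      have hlt : f e < f d0 := by
        have h1 : (Y.filter (fun y => e.1 < y ∧ y < e.2)).card ≤ (I.erase e.1).card :=
          Finset.card_le_card hsub
        have h2 : (I.erase e.1).card < I.card :=
          Finset.card_erase_lt_of_mem (Finset.mem_filter.2 ⟨he1Y, hc1, hc2⟩)
        calc f e ≤ (I.erase e.1).card := h1
          _ < I.card := h2
      exact absurd (hmin e he) (by omega)
    · intro hc
      rw [hI, Finset.mem_filter] at hc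
      obtain ⟨_, hc1, hc2⟩ := hc
      have hnc := hV2 e he d0 hd0
      have he1 : d0.1 ≤ e.1 := by
        by_contra hgt
        exact hnc (Or.inl ⟨by omega, hc1, hc2⟩)
      have hsub : Y.filter (fun y => e.1 < y ∧ y < e.2) ⊆ I.erase e.2 := by
        intro y hy
        rw [Finset.mem_filter] at hy
        refine Finset.mem_erase.2 ⟨by omega, Finset.mem_filter.2 ⟨hy.1, by omega, by omega⟩⟩
      have hlt : f e < f d0 := by
        have h1 : (Y.filter (fun y => e.1 < y ∧ y < e.2)).card ≤ (I.erase e.2).card :=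
          Finset.card_le_card hsub
        have h2 : (I.erase e.2).card < I.card :=
          Finset.card_erase_lt_of_mem (Finset.mem_filter.2 ⟨he2Y, hc1, hc2⟩)
        calc f e ≤ (I.erase e.2).card := h1
          _ < I.card := h2
      exact absurd (hmin e he) (by omega)
  have h0I : (0:ℕ) ∉ I := by rw [hI, Finset.mem_filter]; rintro ⟨_, h, _⟩; omega
  have hNI : (n+1) ∉ I := by
    rw [hI, Finset.mem_filter]
    rintro ⟨_, _, h⟩
    have := hYr hd2Y
    rw [Finset.mem_range] at this
    omega
  have hd2le : d0.2 ≤ n + 1 := by have := hYr hd2Y; rw [Finset.mem_range] at this; omega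
  -- validity of reduced configuration
  have hVr : ValidD n (Y \ I) (D.erase d0) := by
    constructor
    · intro e he
      have heD := Finset.mem_of_mem_erase he
      have hed0 : e ≠ d0 := (Finset.mem_erase.1 he).1
      obtain ⟨he1Y, he2Y, he12, ⟨y, hyY, hy1, hy2⟩, heN⟩ := hV1 e heD
      obtain ⟨he1I, he2I⟩ := hend e heD
      refine ⟨Finset.mem_sdiff.2 ⟨he1Y, he1I⟩, Finset.mem_sdiff.2 ⟨he2Y, he2I⟩, he12, ?_, heN⟩
      by_cases hyI : y ∈ I
      · -- replace the witness
        rw [hI, Finset.mem_filter] at hyI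
        obtain ⟨_, hy3, hy4⟩ := hyI
        have he1le : e.1 ≤ d0.1 := by
          by_contra hgt
          exact he1I (Finset.mem_filter.2 ⟨he1Y, by omega, by omega⟩)
        have he2ge : d0.2 ≤ e.2 := by
          by_contra hgt
          exact he2I (Finset.mem_filter.2 ⟨he2Y, by omega, by omega⟩)
        have hne' : e.1 < d0.1 ∨ d0.2 < e.2 := by
          by_contra hc
          push_neg at hc
          exact hed0 (Prod.ext (by omega) (by omega))
        rcases hne' with h | h
        · refine ⟨d0.1, Finset.mem_sdiff.2 ⟨hd1Y, ?_⟩, h, by omega⟩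
          rw [hI, Finset.mem_filter]; rintro ⟨_, hh, _⟩; omega
        · refine ⟨d0.2, Finset.mem_sdiff.2 ⟨hd2Y, ?_⟩, by omega, h⟩
          rw [hI, Finset.mem_filter]; rintro ⟨_, _, hh⟩; omega
      · exact ⟨y, Finset.mem_sdiff.2 ⟨hyY, hyI⟩, hy1, hy2⟩
    · intro e he e' he'
      exact hV2 e (Finset.mem_of_mem_erase he) e' (Finset.mem_of_mem_erase he')
  -- 4 ≤ Y.card
  have hwne : w ≠ d0.1 ∧ w ≠ d0.2 := ⟨by omega, by omega⟩
  have hY4 : 4 ≤ Y.card := by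
    rcases Nat.eq_zero_or_pos d0.1 with h1 | h1
    · -- d0.1 = 0, so d0.2 < n+1, and {0, w, d0.2, n+1} ⊆ Y
      have hd2lt : d0.2 < n + 1 := by
        rcases lt_or_eq_of_le hd2le with h | h
        · exact h
        · exact absurd ⟨h1, h⟩ hd0N
      have hsub : ({d0.1, w, d0.2, n+1} : Finset ℕ) ⊆ Y := by
        intro y hy
        simp only [Finset.mem_insert, Finset.mem_singleton] at hy
        rcases hy with rfl | rfl | rfl | rfl
        exacts [hd1Y, hwY, hd2Y, hN]
      have hcard : ({d0.1, w, d0.2, n+1} : Finset ℕ).card = 4 := by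
        rw [Finset.card_insert_of_notMem (by simp only [Finset.mem_insert, Finset.mem_singleton]; omega),
          Finset.card_insert_of_notMem (by simp only [Finset.mem_insert, Finset.mem_singleton]; omega),
          Finset.card_insert_of_notMem (by simp only [Finset.mem_insert, Finset.mem_singleton]; omega), Finset.card_singleton]
      calc 4 = ({d0.1, w, d0.2, n+1} : Finset ℕ).card := hcard.symm
        _ ≤ Y.card := Finset.card_le_card hsub
    · have hsub : ({0, d0.1, w, d0.2} : Finset ℕ) ⊆ Y := by
        intro y hy
        simp only [Finset.mem_insert, Finset.mem_singleton] at hy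
        rcases hy with rfl | rfl | rfl | rfl
        exacts [h0, hd1Y, hwY, hd2Y]
      have hcard : ({0, d0.1, w, d0.2} : Finset ℕ).card = 4 := by
        rw [Finset.card_insert_of_notMem (by simp only [Finset.mem_insert, Finset.mem_singleton]; omega),
          Finset.card_insert_of_notMem (by simp only [Finset.mem_insert, Finset.mem_singleton]; omega),
          Finset.card_insert_of_notMem (by simp only [Finset.mem_insert, Finset.mem_singleton]; omega), Finset.card_singleton]
      calc 4 = ({0, d0.1, w, d0.2} : Finset ℕ).card := hcard.symm
        _ ≤ Y.card := Finset.card_le_card hsub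
  refine ⟨d0, hd0, I, rfl, hIne, hend, hVr, Finset.mem_sdiff.2 ⟨h0, h0I⟩,
    Finset.mem_sdiff.2 ⟨hN, hNI⟩, fun y hy => hYr (Finset.mem_sdiff.1 hy).1, hY4, ?_⟩
  have hIY : I ⊆ Y := Finset.filter_subset _ _
  have := Finset.card_le_card hIY
  rw [Finset.card_sdiff_of_subset hIY]
  omega

/-- Upper bound: a valid family has at most `|Y| - 3` diagonals. -/
lemma validD_card_le {n : ℕ} : ∀ (k : ℕ) (Y : Finset ℕ) (D : Finset (ℕ × ℕ)),
    Y.card ≤ k → 0 ∈ Y → (n+1) ∈ Y → Y ⊆ Finset.range (n+2) → ValidD n Y D →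
    D = ∅ ∨ D.card + 3 ≤ Y.card := by
  intro k
  induction k with
  | zero =>
    intro Y D hk h0 _ _ _
    exact absurd (Finset.card_pos.2 ⟨0, h0⟩) (by omega)
  | succ k ih =>
    intro Y D hk h0 hN hYr hV
    rcases Finset.eq_empty_or_nonempty D with rfl | hne
    · exact Or.inl rfl
    obtain ⟨d0, hd0, I, hIdef, hIne, hend, hVr, h0', hN', hYr', hY4, hcard⟩ :=
      min_diag_step h0 hN hYr hV hne
    have hIpos : 1 ≤ I.card := Finset.card_pos.2 hIne
    have hk' : (Y \ I).card ≤ k := by omega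
    rcases ih (Y \ I) (D.erase d0) hk' h0' hN' hYr' hVr with hE | hle
    · -- D = {d0}: card D = 1, and 4 ≤ Y.card
      right
      have : D = {d0} := by
        apply Finset.eq_singleton_iff_unique_mem.2
        refine ⟨hd0, fun e he => ?_⟩
        by_contra hc
        exact absurd (Finset.mem_erase.2 ⟨hc, he⟩) (by rw [hE]; simp)
      rw [this, Finset.card_singleton]
      omega
    · right
      have hDc : D.card = (D.erase d0).card + 1 := by
        rw [Finset.card_erase_of_mem hd0]
        have : 1 ≤ D.card := Finset.card_pos.2 hne
        omega
      omega

/-- Ear extraction: in a full triangulation there is an ear. -/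
lemma ear_exists {n : ℕ} {Y : Finset ℕ} {D : Finset (ℕ × ℕ)}
    (h0 : 0 ∈ Y) (hN : (n+1) ∈ Y) (hYr : Y ⊆ Finset.range (n+2))
    (hV : ValidD n Y D) (hcard : D.card + 3 = Y.card) (hne : D.Nonempty) :
    ∃ v a b : ℕ, (a, b) ∈ D ∧ a < v ∧ v < b ∧ v ∈ Y ∧
      (∀ y ∈ Y, a < y → y < b → y = v) ∧ (∀ e ∈ D, e.1 ≠ v ∧ e.2 ≠ v) := by
  obtain ⟨d0, hd0, I, hIdef, hIne, hend, hVr, h0', hN', hYr', hY4, hcards⟩ :=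
    min_diag_step h0 hN hYr hV hne
  have hIpos : 1 ≤ I.card := Finset.card_pos.2 hIne
  have hI1 : I.card = 1 := by
    rcases validD_card_le (Y \ I).card (Y \ I) (D.erase d0) le_rfl h0' hN' hYr' hVr with hE | hle
    · -- D = {d0}: Y.card = 4; show I.card ≤ 1
      have hD1 : D = {d0} := by
        apply Finset.eq_singleton_iff_unique_mem.2
        refine ⟨hd0, fun e he => ?_⟩
        by_contra hc
        exact absurd (Finset.mem_erase.2 ⟨hc, he⟩) (by rw [hE]; simp)
      have hDc : D.card = 1 := by rw [hD1]; rfl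
      -- I ⊆ Y \ {d0.1, d0.2, x} where x ∈ {0, n+1} \ {d0.1, d0.2}
      obtain ⟨hd1Y, hd2Y, hd12, _, hd0N⟩ := hV.1 d0 hd0
      have hd2le : d0.2 ≤ n+1 := by have := hYr hd2Y; rw [Finset.mem_range] at this; omega
      have h0nI : (0:ℕ) ∉ I := by rw [hIdef, Finset.mem_filter]; rintro ⟨_, h, _⟩; omega
      have hNnI : (n+1) ∉ I := by rw [hIdef, Finset.mem_filter]; rintro ⟨_, _, h⟩; omega
      have hd1nI : d0.1 ∉ I := by rw [hIdef, Finset.mem_filter]; rintro ⟨_, h, _⟩; omega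
      have hd2nI : d0.2 ∉ I := by rw [hIdef, Finset.mem_filter]; rintro ⟨_, _, h⟩; omega
      rcases Nat.eq_zero_or_pos d0.1 with h1 | h1
      · have hd2lt : d0.2 < n+1 := by
          rcases lt_or_eq_of_le hd2le with h | h
          · exact h
          · exact absurd ⟨h1, h⟩ hd0N
        have hsub : I ⊆ Y \ {d0.1, d0.2, n+1} := by
          intro y hy
          rw [Finset.mem_sdiff]
          refine ⟨Finset.mem_filter.1 (hIdef ▸ hy) |>.1, ?_⟩
          simp only [Finset.mem_insert, Finset.mem_singleton]
          push_neg
          refine ⟨fun hc => hd1nI (hc ▸ hy), fun hc => hd2nI (hc ▸ hy), fun hc => hNnI (hc ▸ hy)⟩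
        have h3sub : ({d0.1, d0.2, n+1} : Finset ℕ) ⊆ Y := by
          intro y hy
          simp only [Finset.mem_insert, Finset.mem_singleton] at hy
          rcases hy with rfl | rfl | rfl
          exacts [hd1Y, hd2Y, hN]
        have h3card : ({d0.1, d0.2, n+1} : Finset ℕ).card = 3 := by
          rw [Finset.card_insert_of_notMem (by simp only [Finset.mem_insert, Finset.mem_singleton]; omega),
            Finset.card_insert_of_notMem (by simp only [Finset.mem_insert, Finset.mem_singleton]; omega), Finset.card_singleton]
        have := Finset.card_le_card hsub
        rw [Finset.card_sdiff_of_subset h3sub, h3card] at this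
        omega
      · have hsub : I ⊆ Y \ {0, d0.1, d0.2} := by
          intro y hy
          rw [Finset.mem_sdiff]
          refine ⟨Finset.mem_filter.1 (hIdef ▸ hy) |>.1, ?_⟩
          simp only [Finset.mem_insert, Finset.mem_singleton]
          push_neg
          refine ⟨fun hc => h0nI (hc ▸ hy), fun hc => hd1nI (hc ▸ hy), fun hc => hd2nI (hc ▸ hy)⟩
        have h3sub : ({0, d0.1, d0.2} : Finset ℕ) ⊆ Y := by
          intro y hy
          simp only [Finset.mem_insert, Finset.mem_singleton] at hy
          rcases hy with rfl | rfl | rfl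
          exacts [h0, hd1Y, hd2Y]
        have h3card : ({0, d0.1, d0.2} : Finset ℕ).card = 3 := by
          rw [Finset.card_insert_of_notMem (by simp only [Finset.mem_insert, Finset.mem_singleton]; omega),
            Finset.card_insert_of_notMem (by simp only [Finset.mem_insert, Finset.mem_singleton]; omega), Finset.card_singleton]
        have := Finset.card_le_card hsub
        rw [Finset.card_sdiff_of_subset h3sub, h3card] at this
        omega
    · have hDc : D.card = (D.erase d0).card + 1 := by
        rw [Finset.card_erase_of_mem hd0]
        have : 1 ≤ D.card := Finset.card_pos.2 hne
        omega
      omega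
  obtain ⟨v, hvI⟩ := Finset.card_eq_one.1 hI1
  have hvmem : v ∈ I := by rw [hvI]; exact Finset.mem_singleton_self v
  rw [hIdef, Finset.mem_filter] at hvmem
  refine ⟨v, d0.1, d0.2, hd0, hvmem.2.1, hvmem.2.2, hvmem.1, ?_, ?_⟩
  · intro y hy h1 h2
    have : y ∈ I := by rw [hIdef, Finset.mem_filter]; exact ⟨hy, h1, h2⟩
    rw [hvI, Finset.mem_singleton] at this
    exact this
  · intro e he
    obtain ⟨h1, h2⟩ := hend e he
    constructor
    · intro hc; exact h1 (by rw [hvI, hc]; exact Finset.mem_singleton_self v)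
    · intro hc; exact h2 (by rw [hvI, hc]; exact Finset.mem_singleton_self v)

lemma phiAux_cons {v : ℕ} {rest : List ℕ} (h : rest ≠ []) (Y : Finset ℕ) :
    phiAux (v :: rest) Y = insert (predIn Y v, succIn Y v) (phiAux rest (Y.erase v)) := by
  cases rest with
  | nil => exact absurd rfl h
  | cons w r => rfl

/-- Main construction for surjectivity. -/
lemma surj_aux {n : ℕ} : ∀ (k : ℕ) (Y : Finset ℕ) (D : Finset (ℕ × ℕ)),
    Y.card ≤ k → 0 ∈ Y → (n+1) ∈ Y → Y ⊆ Finset.range (n+2) → ValidD n Y D →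
    D.card + 3 = Y.card →
    ∃ l : List ℕ, l.Nodup ∧ l.toFinset = Y.filter (fun y => y ≠ 0 ∧ y ≠ n+1) ∧
      phiAux l Y = D := by
  intro k
  induction k with
  | zero =>
    intro Y D hk h0 _ _ _ _
    exact absurd (Finset.card_pos.2 ⟨0, h0⟩) (by omega)
  | succ k ih =>
    intro Y D hk h0 hN hYr hV hcard
    have hn1 : n ≠ 0 → (0:ℕ) ≠ n+1 := fun h => by omega
    rcases Finset.eq_empty_or_nonempty D with rfl | hne
    · -- Y.card = 3
      have hY3 : Y.card = 3 := by simpa using hcard.symm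
      have hn0 : n ≠ 0 := by
        rintro rfl
        have := Finset.card_le_card hYr
        simp [Finset.card_range] at this
        omega
      have h2sub : ({0, n+1} : Finset ℕ) ⊆ Y := by
        intro y hy
        simp only [Finset.mem_insert, Finset.mem_singleton] at hy
        rcases hy with rfl | rfl
        exacts [h0, hN]
      have hfilt : Y.filter (fun y => y ≠ 0 ∧ y ≠ n+1) = Y \ {0, n+1} := by
        ext y; simp only [Finset.mem_filter, Finset.mem_sdiff, Finset.mem_insert, Finset.mem_singleton]; tauto
      have hfc : (Y.filter (fun y => y ≠ 0 ∧ y ≠ n+1)).card = 1 := by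
        rw [hfilt, Finset.card_sdiff_of_subset h2sub, hY3]
        rw [Finset.card_insert_of_notMem (by simp only [Finset.mem_insert, Finset.mem_singleton]; omega), Finset.card_singleton]
      obtain ⟨w, hw⟩ := Finset.card_eq_one.1 hfc
      exact ⟨[w], by simp, by simp [hw], rfl⟩
    · -- find ear, recurse
      obtain ⟨v, a, b, hab, hav, hvb, hvY, hgap, hear⟩ := ear_exists h0 hN hYr hV hcard hne
      obtain ⟨haY, hbY, _, _, habN⟩ := hV.1 (a, b) hab
      dsimp at haY hbY habN
      have hble : b ≤ n+1 := by have := hYr hbY; rw [Finset.mem_range] at this; omega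
      have hv0 : v ≠ 0 := by omega
      have hvN : v ≠ n+1 := by omega
      set Y' := Y.erase v with hY'
      set D' := D.erase (a, b) with hD'
      have hDpos : 1 ≤ D.card := Finset.card_pos.2 hne
      have hYpos : 4 ≤ Y.card := by omega
      have hV' : ValidD n Y' D' := by
        constructor
        · intro e he
          have heD := Finset.mem_of_mem_erase he
          have hed0 : e ≠ (a, b) := (Finset.mem_erase.1 he).1
          obtain ⟨he1Y, he2Y, he12, ⟨y, hyY, hy1, hy2⟩, heN⟩ := hV.1 e heD
          have hev := hear e heD
          refine ⟨Finset.mem_erase.2 ⟨hev.1, he1Y⟩, Finset.mem_erase.2 ⟨hev.2, he2Y⟩,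
            he12, ?_, heN⟩
          by_cases hyv : y = v
          · subst hyv
            have he1a : e.1 ≤ a := by
              by_contra hgt
              push_neg at hgt
              rcases lt_trichotomy e.1 b with h | h | h
              · exact hev.1 (hgap e.1 he1Y hgt h)
              · omega
              · omega
            have he2b : b ≤ e.2 := by
              by_contra hgt
              push_neg at hgt
              rcases lt_trichotomy a e.2 with h | h | h
              · exact hev.2 (hgap e.2 he2Y h hgt)
              · omega
              · omega
            have hne' : e.1 < a ∨ b < e.2 := by
              by_contra hc
              push_neg at hc
              exact hed0 (Prod.ext (by omega) (by omega))
            rcases hne' with h | h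
            · exact ⟨a, Finset.mem_erase.2 ⟨by omega, haY⟩, h, by omega⟩
            · exact ⟨b, Finset.mem_erase.2 ⟨by omega, hbY⟩, by omega, h⟩
          · exact ⟨y, Finset.mem_erase.2 ⟨hyv, hyY⟩, hy1, hy2⟩
        · intro e he e' he'
          exact hV.2 e (Finset.mem_of_mem_erase he) e' (Finset.mem_of_mem_erase he')
      have h0' : (0:ℕ) ∈ Y' := Finset.mem_erase.2 ⟨fun h => hv0 h.symm, h0⟩
      have hN' : (n+1) ∈ Y' := Finset.mem_erase.2 ⟨fun h => hvN h.symm, hN⟩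
      have hYr' : Y' ⊆ Finset.range (n+2) := fun y hy => hYr (Finset.mem_of_mem_erase hy)
      have hcY' : Y'.card = Y.card - 1 := Finset.card_erase_of_mem hvY
      have hcD' : D'.card = D.card - 1 := Finset.card_erase_of_mem hab
      obtain ⟨l', hnd', htf', hphi'⟩ := ih Y' D' (by omega) h0' hN' hYr' hV' (by omega)
      have hn0 : n ≠ 0 := by
        rintro rfl
        have := Finset.card_le_card hYr
        simp [Finset.card_range] at this
        omega
      have hlne : l' ≠ [] := by
        intro hc
        subst hc
        have h2sub : ({0, n+1} : Finset ℕ) ⊆ Y' := by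
          intro y hy
          simp only [Finset.mem_insert, Finset.mem_singleton] at hy
          rcases hy with rfl | rfl
          exacts [h0', hN']
        have hfilt : Y'.filter (fun y => y ≠ 0 ∧ y ≠ n+1) = Y' \ {0, n+1} := by
          ext y; simp only [Finset.mem_filter, Finset.mem_sdiff, Finset.mem_insert, Finset.mem_singleton]; tauto
        have : (Y'.filter (fun y => y ≠ 0 ∧ y ≠ n+1)).card = Y'.card - 2 := by
          rw [hfilt, Finset.card_sdiff_of_subset h2sub,
            Finset.card_insert_of_notMem (by simp only [Finset.mem_insert, Finset.mem_singleton]; omega), Finset.card_singleton]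
        rw [← htf'] at this
        simp at this
        omega
      refine ⟨v :: l', ?_, ?_, ?_⟩
      · refine List.nodup_cons.2 ⟨?_, hnd'⟩
        intro hc
        have : v ∈ l'.toFinset := List.mem_toFinset.2 hc
        rw [htf', Finset.mem_filter] at this
        exact (Finset.mem_erase.1 this.1).1 rfl
      · rw [List.toFinset_cons, htf']
        ext y
        simp only [Finset.mem_insert, Finset.mem_filter, Finset.mem_erase, hY']
        constructor
        · rintro (rfl | ⟨⟨h1, h2⟩, h3⟩)
          · exact ⟨hvY, hv0, hvN⟩
          · exact ⟨h2, h3⟩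
        · rintro ⟨h1, h2, h3⟩
          by_cases hyv : y = v
          · exact Or.inl hyv
          · exact Or.inr ⟨⟨hyv, h1⟩, h2, h3⟩
      · rw [phiAux_cons hlne, hphi']
        have hpred : predIn Y v = a := by
          obtain ⟨hp1, hp2, hp3⟩ := predIn_spec haY hav
          rcases lt_or_eq_of_le (hp3 a haY hav) with hlt | heq
          · exact absurd (hgap _ hp1 hlt (by omega)) (by omega)
          · omega
        have hsucc : succIn Y v = b := by
          obtain ⟨hp1, hp2, hp3⟩ := succIn_spec hbY hvb
          rcases lt_or_eq_of_le (hp3 b hbY hvb) with hlt | heq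
          · exact absurd (hgap _ hp1 (by omega) hlt) (by omega)
          · omega
        rw [hpred, hsucc, hD', Finset.insert_erase hab]

lemma std_list_nodup (n : ℕ) : ((List.range n).map (· + 1)).Nodup :=
  (List.nodup_range (n := n)).map (fun a b h => by omega)

lemma std_list_mem {n w : ℕ} : w ∈ (List.range n).map (· + 1) ↔ 1 ≤ w ∧ w ≤ n := by
  simp only [List.mem_map, List.mem_range]
  constructor
  · rintro ⟨i, hi, rfl⟩; omega
  · rintro ⟨h1, h2⟩; exact ⟨w - 1, by omega, by omega⟩

lemma part1 (n : ℕ) (D : Finset (ℕ × ℕ)) (hT : IsTriangulation n D) :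
    ∃ l : List ℕ, l.Perm ((List.range n).map (· + 1)) ∧ phiT n l = D := by
  obtain ⟨hT1, hT2, hT3⟩ := hT
  rcases Nat.eq_zero_or_pos n with rfl | hn
  · have hD : D = ∅ := Finset.card_eq_zero.1 (by simpa using hT3)
    exact ⟨[], by simp, by simp [hD, phiT, phiAux]⟩
  · have hV : ValidD n (Finset.range (n+2)) D := by
      constructor
      · intro d hd
        obtain ⟨h1, h2, h3, h4⟩ := hT1 d hd
        refine ⟨Finset.mem_range.2 (by omega), Finset.mem_range.2 (by omega), h1,
          ⟨d.1 + 1, Finset.mem_range.2 (by omega), by omega, by omega⟩, h4⟩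
      · exact hT2
    have h0 : (0:ℕ) ∈ Finset.range (n+2) := Finset.mem_range.2 (by omega)
    have hN : (n+1) ∈ Finset.range (n+2) := Finset.mem_range.2 (by omega)
    obtain ⟨l, hnd, htf, hphi⟩ := surj_aux (Finset.range (n+2)).card (Finset.range (n+2)) D
      le_rfl h0 hN (le_refl _) hV (by rw [hT3, Finset.card_range]; omega)
    refine ⟨l, ?_, hphi⟩
    apply List.perm_of_nodup_nodup_toFinset_eq hnd (std_list_nodup n)
    rw [htf]
    ext y
    simp only [Finset.mem_filter, Finset.mem_range, List.mem_toFinset]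
    rw [std_list_mem]
    omega

lemma insert_comm' (A : Finset (ℕ × ℕ)) (a b : ℕ × ℕ) :
    insert a (insert b A) = insert b (insert a A) := by
  ext y; simp only [Finset.mem_insert]; tauto

lemma union_insert' (s t : Finset (ℕ × ℕ)) (a : ℕ × ℕ) :
    s ∪ insert a t = insert a (s ∪ t) := by
  ext y; simp only [Finset.mem_insert, Finset.mem_union]; tauto

lemma getLast_notmem_dropLast {l : List ℕ} (h : l ≠ []) (hnd : l.Nodup) :
    l.getLast h ∉ l.dropLast := by
  have heq := List.dropLast_append_getLast h
  rw [← heq] at hnd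
  rw [List.nodup_append] at hnd
  intro hc
  exact hnd.2.2 _ hc _ (by simp) rfl

lemma phiT_decomp {n : ℕ} (u : List ℕ) (x z : ℕ) {vv : List ℕ} (h : vv ≠ []) :
    phiT n (u ++ [x, z] ++ vv) = phiG u (Finset.range (n+2)) ∪
      phiG (x :: z :: vv.dropLast) (u.foldl Finset.erase (Finset.range (n+2))) := by
  unfold phiT
  rw [phiAux_eq_phiG]
  have h1 : (u ++ [x, z] ++ vv).dropLast = u ++ (x :: z :: vv.dropLast) := by
    rw [List.dropLast_append_of_ne_nil h]
    simp
  rw [h1, phiG_split]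

lemma phiT_decomp0 {n : ℕ} (u : List ℕ) (x z : ℕ) :
    phiT n (u ++ [x, z]) = phiG u (Finset.range (n+2)) ∪
      phiG [x] (u.foldl Finset.erase (Finset.range (n+2))) := by
  unfold phiT
  rw [phiAux_eq_phiG]
  have h1 : (u ++ [x, z]).dropLast = u ++ [x] := by
    have : u ++ [x, z] = (u ++ [x]) ++ [z] := by simp
    rw [this, List.dropLast_concat]
  rw [h1, phiG_split]

/-- The common flip-production step. -/
lemma flip_pair {n : ℕ} {G T D1 D2 : Finset (ℕ × ℕ)} {a x z dd : ℕ}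
    (hax : a < x) (hxz : x < z) (hzd : z < dd) (hdle : dd ≤ n + 1)
    (Eax : ∀ D, G ⊆ D → IsEdge n D a x)
    (Exz : ∀ D, G ⊆ D → IsEdge n D x z)
    (Ezd : ∀ D, G ⊆ D → IsEdge n D z dd)
    (hD1 : D1 = G ∪ insert (a, z) T) (hD2 : D2 = G ∪ insert (x, dd) T)
    (hEad1 : IsEdge n D1 a dd) (hEad2 : IsEdge n D2 a dd)
    (hnm1G : (a, z) ∉ G) (hnm1T : (a, z) ∉ T)
    (hnm2G : (x, dd) ∉ G) (hnm2T : (x, dd) ∉ T) :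
    FlipAdj n D1 D2 ∧ FlipAdj n D2 D1 := by
  have hsub1 : G ⊆ D1 := by rw [hD1]; exact Finset.subset_union_left
  have hsub2 : G ⊆ D2 := by rw [hD2]; exact Finset.subset_union_left
  have haz1 : (a, z) ∈ D1 := by rw [hD1]; exact Finset.mem_union_right _ (Finset.mem_insert_self _ _)
  have hxd2 : (x, dd) ∈ D2 := by rw [hD2]; exact Finset.mem_union_right _ (Finset.mem_insert_self _ _)
  have hEaz : IsEdge n D1 a z := ⟨by omega, by omega, Or.inr (Or.inr haz1)⟩
  have hExd : IsEdge n D2 x dd := ⟨by omega, hdle, Or.inr (Or.inr hxd2)⟩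
  have herase1 : D1.erase (a, z) = G ∪ T := by
    rw [hD1, Finset.erase_union_distrib, Finset.erase_eq_of_notMem hnm1G,
      Finset.erase_insert hnm1T]
  have herase2 : D2.erase (x, dd) = G ∪ T := by
    rw [hD2, Finset.erase_union_distrib, Finset.erase_eq_of_notMem hnm2G,
      Finset.erase_insert hnm2T]
  constructor
  · refine ⟨a, x, z, dd, hax, hxz, hzd, Or.inr ⟨?_, ?_, ?_⟩⟩
    · exact ⟨hax, hxz, Eax D1 hsub1, Exz D1 hsub1, hEaz⟩
    · exact ⟨by omega, hzd, hEaz, Ezd D1 hsub1, hEad1⟩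
    · rw [herase1, hD2, union_insert']
  · refine ⟨a, x, z, dd, hax, hxz, hzd, Or.inl ⟨?_, ?_, ?_⟩⟩
    · exact ⟨hax, by omega, Eax D2 hsub2, hExd, hEad2⟩
    · exact ⟨hxz, hzd, Exz D2 hsub2, Ezd D2 hsub2, hExd⟩
    · rw [herase2, hD1, union_insert']

lemma part2_core {n : ℕ} (u vv : List ℕ) (x z : ℕ)
    (hnd0 : (u ++ x :: z :: vv).Nodup)
    (hmem : ∀ w ∈ u ++ x :: z :: vv, 1 ≤ w ∧ w ≤ n)
    (hint : ∀ y, 1 ≤ y → y ≤ n → y ∈ u ++ x :: z :: vv)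
    (hxz : x < z) :
    phiT n (u ++ [x, z] ++ vv) = phiT n (u ++ [z, x] ++ vv) ∨
      (FlipAdj n (phiT n (u ++ [x, z] ++ vv)) (phiT n (u ++ [z, x] ++ vv)) ∧
       FlipAdj n (phiT n (u ++ [z, x] ++ vv)) (phiT n (u ++ [x, z] ++ vv))) := by
  set Y0 := Finset.range (n+2) with hY0
  set Yu := Y0 \ u.toFinset with hYu
  have herase : u.foldl Finset.erase Y0 = Yu := erases_eq u Y0
  rw [List.nodup_append] at hnd0
  obtain ⟨hund, hxnd, hdisj⟩ := hnd0
  have hx_range : 1 ≤ x ∧ x ≤ n := hmem x (by simp)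
  have hz_range : 1 ≤ z ∧ z ≤ n := hmem z (by simp)
  have hvv_range : ∀ w ∈ vv, 1 ≤ w ∧ w ≤ n := fun w hw => hmem w (by simp [hw])
  have hu_range : ∀ w ∈ u, 1 ≤ w ∧ w ≤ n := fun w hw => hmem w (by simp [hw])
  have hxnu : x ∉ u := fun hc => hdisj _ hc _ (by simp) rfl
  have hznu : z ∉ u := fun hc => hdisj _ hc _ (by simp) rfl
  have hvvnu : ∀ w ∈ vv, w ∉ u := fun w hw hc => hdisj _ hc _ (by simp [hw]) rfl
  have hxnvv : x ∉ vv := fun hc => (List.nodup_cons.1 hxnd).1 (by simp [hc])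
  have hznvv : z ∉ vv := (List.nodup_cons.1 (List.nodup_cons.1 hxnd).2).1
  have hvvnd : vv.Nodup := (List.nodup_cons.1 (List.nodup_cons.1 hxnd).2).2
  have h0Yu : (0:ℕ) ∈ Yu := by
    rw [hYu, Finset.mem_sdiff, hY0]
    exact ⟨Finset.mem_range.2 (by omega), fun hc => by
      have := hu_range 0 (List.mem_toFinset.1 hc); omega⟩
  have hNYu : (n+1) ∈ Yu := by
    rw [hYu, Finset.mem_sdiff, hY0]
    exact ⟨Finset.mem_range.2 (by omega), fun hc => by
      have := hu_range (n+1) (List.mem_toFinset.1 hc); omega⟩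
  have hYusub : Yu ⊆ Y0 := by rw [hYu]; exact Finset.sdiff_subset
  have hYur : ∀ y ∈ Yu, y ≤ n+1 := fun y hy => by
    have := hYusub hy; rw [hY0, Finset.mem_range] at this; omega
  have hxYu : x ∈ Yu := by
    rw [hYu, Finset.mem_sdiff, hY0]
    exact ⟨Finset.mem_range.2 (by omega), fun hc => hxnu (List.mem_toFinset.1 hc)⟩
  have hzYu : z ∈ Yu := by
    rw [hYu, Finset.mem_sdiff, hY0]
    exact ⟨Finset.mem_range.2 (by omega), fun hc => hznu (List.mem_toFinset.1 hc)⟩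
  have hintYu : ∀ y ∈ Yu, y ≠ 0 → y ≠ n+1 → y = x ∨ y = z ∨ y ∈ vv := by
    intro y hy h1 h2
    have hyr := hYusub hy
    rw [hY0, Finset.mem_range] at hyr
    have h3 := hint y (by omega) (by omega)
    rw [List.mem_append] at h3
    rcases h3 with h | h
    · exact absurd (List.mem_toFinset.2 h) ((Finset.mem_sdiff.1 hy).2)
    · simp only [List.mem_cons] at h; tauto
  have hPreu : Pre n u Y0 := by
    refine ⟨hund, fun w hw => ⟨?_, hu_range w hw⟩, ?_, ?_, by rw [hY0], x, hxnu,
      hx_range.1, hx_range.2, ?_⟩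
    · rw [hY0]; exact Finset.mem_range.2 (by have := hu_range w hw; omega)
    · rw [hY0]; exact Finset.mem_range.2 (by omega)
    · rw [hY0]; exact Finset.mem_range.2 (by omega)
    · rw [hY0]; exact Finset.mem_range.2 (by omega)
  obtain ⟨Hu1, _, _⟩ := phiG_props n u Y0 hPreu
  set G0 := phiG u Y0 with hG0
  have hnotG0 : ∀ (p q w : ℕ), w ∈ Yu → p < w → w < q → (p, q) ∉ G0 := by
    intro p q w hw h1 h2 hc
    obtain ⟨_, _, _, _, h5, _⟩ := Hu1 _ hc
    exact h5 w (by rw [herase]; exact hw) ⟨h1, h2⟩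
  have hedge : ∀ p q : ℕ, p ∈ Yu → q ∈ Yu → p < q → (∀ y ∈ Yu, ¬(p < y ∧ y < q)) →
      ∀ D : Finset (ℕ × ℕ), G0 ⊆ D → IsEdge n D p q := by
    intro p q hp hq hpq hgap D hD
    refine ⟨hpq, hYur q hq, ?_⟩
    rcases phiG_adj u Y0 p q (by rw [herase]; exact hp) (by rw [herase]; exact hq) hpq
        (by rw [herase]; exact hgap) with hl | hr
    · left
      have hqr := hYusub hq
      rw [hY0, Finset.mem_range] at hqr
      by_contra hne
      exact hl (p+1) (by rw [hY0]; exact Finset.mem_range.2 (by omega)) ⟨by omega, by omega⟩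
    · exact Or.inr (Or.inr (hD hr))
  by_cases hadj : ∃ w ∈ Yu, x < w ∧ w < z
  · -- nonadjacent letters: images are equal
    obtain ⟨w, hwYu, hw1, hw2⟩ := hadj
    have hwvv : w ∈ vv := by
      rcases hintYu w hwYu (by omega) (by have := hz_range.2; omega) with rfl | rfl | h
      · omega
      · omega
      · exact h
    have hvvne : vv ≠ [] := fun hc => by rw [hc] at hwvv; exact absurd hwvv (List.not_mem_nil)
    left
    rw [phiT_decomp u x z hvvne, phiT_decomp u z x hvvne, herase]
    congr 1
    set m := vv.dropLast with hm
    obtain ⟨hs1, hs2, hs3⟩ := succIn_spec (Y := Yu) (v := x) hwYu hw1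
    set s := succIn Yu x with hs
    have hsw : s ≤ w := hs3 w hwYu hw1
    have hsz : s ≠ z := by omega
    have e3 : succIn (Yu.erase z) x = s := by
      obtain ⟨hb1, hb2, hb3⟩ := succIn_spec (Y := Yu.erase z) (v := x)
        (Finset.mem_erase.2 ⟨hsz, hs1⟩) hs2
      have h1 : succIn (Yu.erase z) x ≤ s := hb3 s (Finset.mem_erase.2 ⟨hsz, hs1⟩) hs2
      have h2 : s ≤ succIn (Yu.erase z) x := hs3 _ (Finset.mem_of_mem_erase hb1) hb2
      omega
    have e4 : predIn (Yu.erase z) x = predIn Yu x := by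
      have hfeq : (Yu.erase z).filter (· < x) = Yu.filter (· < x) := by
        ext y
        simp only [Finset.mem_filter, Finset.mem_erase]
        constructor
        · rintro ⟨⟨_, h⟩, h2⟩; exact ⟨h, h2⟩
        · rintro ⟨h1, h2⟩; exact ⟨⟨by omega, h1⟩, h2⟩
      unfold predIn; rw [hfeq]
    obtain ⟨hp1, hp2, hp3⟩ := predIn_spec (Y := Yu) (v := z) hwYu hw2
    set p := predIn Yu z with hp
    have hpw : w ≤ p := hp3 w hwYu hw2
    have hpx : p ≠ x := by omega
    have e5 : predIn (Yu.erase x) z = p := by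
      obtain ⟨hb1, hb2, hb3⟩ := predIn_spec (Y := Yu.erase x) (v := z)
        (Finset.mem_erase.2 ⟨hpx, hp1⟩) hp2
      have h1 : p ≤ predIn (Yu.erase x) z := hb3 p (Finset.mem_erase.2 ⟨hpx, hp1⟩) hp2
      have h2 : predIn (Yu.erase x) z ≤ p := hp3 _ (Finset.mem_of_mem_erase hb1) hb2
      omega
    have e6 : succIn (Yu.erase x) z = succIn Yu z := by
      have hfeq : (Yu.erase x).filter (z < ·) = Yu.filter (z < ·) := by
        ext y
        simp only [Finset.mem_filter, Finset.mem_erase]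
        constructor
        · rintro ⟨⟨_, h⟩, h2⟩; exact ⟨h, h2⟩
        · rintro ⟨h1, h2⟩; exact ⟨⟨by omega, h1⟩, h2⟩
      unfold succIn; rw [hfeq]
    have hcomm : (Yu.erase x).erase z = (Yu.erase z).erase x := by
      ext y; simp only [Finset.mem_erase]; tauto
    show insert (predIn Yu x, succIn Yu x)
        (insert (predIn (Yu.erase x) z, succIn (Yu.erase x) z) (phiG m ((Yu.erase x).erase z)))
      = insert (predIn Yu z, succIn Yu z)
        (insert (predIn (Yu.erase z) x, succIn (Yu.erase z) x) (phiG m ((Yu.erase z).erase x)))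
    rw [e3, e4, e5, e6, hcomm, ← hs, ← hp, insert_comm']
  · -- adjacent letters: flip
    push_neg at hadj
    have hgap_xz : ∀ y ∈ Yu, ¬(x < y ∧ y < z) := by
      intro y hy ⟨h1, h2⟩; exact absurd h2 (by have := hadj y hy h1; omega)
    obtain ⟨ha1, ha2, ha3⟩ := predIn_spec (Y := Yu) (v := x) h0Yu (by omega)
    set a := predIn Yu x with ha
    obtain ⟨hd1, hd2, hd3⟩ := succIn_spec (Y := Yu) (v := z) hNYu (by have := hz_range.2; omega)
    set dd := succIn Yu z with hdd
    have hgap_ax : ∀ y ∈ Yu, ¬(a < y ∧ y < x) := by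
      intro y hy ⟨h1, h2⟩
      have := ha3 y hy h2; omega
    have hgap_zd : ∀ y ∈ Yu, ¬(z < y ∧ y < dd) := by
      intro y hy ⟨h1, h2⟩
      have := hd3 y hy h1; omega
    have hcomb : ∀ y ∈ Yu, a < y → y < dd → y = x ∨ y = z := by
      intro y hy h1 h2
      rcases lt_trichotomy y x with h | h | h
      · exact absurd ⟨h1, h⟩ (hgap_ax y hy)
      · exact Or.inl h
      · rcases lt_trichotomy y z with h' | h' | h'
        · exact absurd ⟨h, h'⟩ (hgap_xz y hy)
        · exact Or.inr h'
        · exact absurd ⟨h', h2⟩ (hgap_zd y hy)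
    have hsx : succIn Yu x = z := by
      obtain ⟨hb1, hb2, hb3⟩ := succIn_spec (Y := Yu) (v := x) hzYu hxz
      have h1 : succIn Yu x ≤ z := hb3 z hzYu hxz
      rcases lt_or_eq_of_le h1 with h | h
      · exact absurd ⟨hb2, h⟩ (hgap_xz _ hb1)
      · exact h
    have hpz : predIn Yu z = x := by
      obtain ⟨hb1, hb2, hb3⟩ := predIn_spec (Y := Yu) (v := z) hxYu hxz
      have h1 : x ≤ predIn Yu z := hb3 x hxYu hxz
      rcases lt_or_eq_of_le h1 with h | h
      · exact absurd ⟨h, hb2⟩ (hgap_xz _ hb1)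
      · exact h.symm
    have hzled : z ≤ n+1 := by have := hz_range.2; omega
    have hEax : ∀ D : Finset (ℕ × ℕ), G0 ⊆ D → IsEdge n D a x :=
      hedge a x ha1 hxYu ha2 hgap_ax
    have hExz : ∀ D : Finset (ℕ × ℕ), G0 ⊆ D → IsEdge n D x z :=
      hedge x z hxYu hzYu hxz hgap_xz
    have hEzd : ∀ D : Finset (ℕ × ℕ), G0 ⊆ D → IsEdge n D z dd :=
      hedge z dd hzYu hd1 hd2 hgap_zd
    have hazG0 : (a, z) ∉ G0 := hnotG0 a z x hxYu ha2 hxz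
    have hxdG0 : (x, dd) ∉ G0 := hnotG0 x dd z hzYu hxz hd2
    have hddle : dd ≤ n+1 := hYur dd hd1
    rcases List.eq_nil_or_concat vv with rfl | ⟨m, last, hconcat⟩
    · -- vv = []
      have ha0 : a = 0 := by
        by_contra hne
        have haN : a ≠ n+1 := by have := hx_range.2; omega
        rcases hintYu a ha1 hne haN with h | h | h
        · omega
        · omega
        · exact absurd h (List.not_mem_nil)
      have hdN : dd = n+1 := by
        by_contra hne
        have hd0 : dd ≠ 0 := by omega
        rcases hintYu dd hd1 hd0 hne with h | h | h
        · omega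
        · omega
        · exact absurd h (List.not_mem_nil)
      have hD1 : phiT n (u ++ [x, z] ++ []) = G0 ∪ insert (a, z) ∅ := by
        rw [List.append_nil, phiT_decomp0, herase]
        congr 1
        show insert (predIn Yu x, succIn Yu x) (phiG [] (Yu.erase x)) = _
        rw [hsx, ← ha]
        rfl
      have hD2 : phiT n (u ++ [z, x] ++ []) = G0 ∪ insert (x, dd) ∅ := by
        rw [List.append_nil, phiT_decomp0, herase]
        congr 1
        show insert (predIn Yu z, succIn Yu z) (phiG [] (Yu.erase z)) = _
        rw [hpz, ← hdd]
        rfl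
      right
      have hEad1 : IsEdge n (phiT n (u ++ [x, z] ++ [])) a dd :=
        ⟨by omega, by omega, Or.inr (Or.inl ⟨ha0, hdN⟩)⟩
      have hEad2 : IsEdge n (phiT n (u ++ [z, x] ++ [])) a dd :=
        ⟨by omega, by omega, Or.inr (Or.inl ⟨ha0, hdN⟩)⟩
      exact flip_pair (by omega) hxz (by omega) hddle hEax hExz hEzd hD1 hD2 hEad1 hEad2
        hazG0 (Finset.notMem_empty _) hxdG0 (Finset.notMem_empty _)
    · -- vv = m ++ [last]
      rw [List.concat_eq_append] at hconcat
      subst hconcat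
      have hvvne : m ++ [last] ≠ [] := by simp
      have hdrop : (m ++ [last]).dropLast = m := List.dropLast_concat ..
      have hlast_range := hvv_range last (by simp)
      have hlastYu2 : last ∈ (Yu.erase x).erase z := by
        refine Finset.mem_erase.2 ⟨?_, Finset.mem_erase.2 ⟨?_, ?_⟩⟩
        · intro hc; exact hznvv (by simp [hc])
        · intro hc; exact hxnvv (by simp [hc])
        · rw [hYu, Finset.mem_sdiff, hY0]
          exact ⟨Finset.mem_range.2 (by omega),
            fun hc => hvvnu last (by simp) (List.mem_toFinset.1 hc)⟩
      have hlastnm : last ∉ m := by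
        have := getLast_notmem_dropLast hvvne hvvnd
        rwa [hdrop, List.getLast_concat] at this
      have hPre2 : Pre n m ((Yu.erase x).erase z) := by
        refine ⟨?_, ?_, ?_, ?_, ?_, last, hlastnm, hlast_range.1, hlast_range.2, hlastYu2⟩
        · exact (List.nodup_append.1 hvvnd).1
        · intro w hw
          have hwvv : w ∈ m ++ [last] := by simp [hw]
          refine ⟨Finset.mem_erase.2 ⟨?_, Finset.mem_erase.2 ⟨?_, ?_⟩⟩, hvv_range w hwvv⟩
          · intro hc; exact hznvv (hc ▸ hwvv)
          · intro hc; exact hxnvv (hc ▸ hwvv)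
          · rw [hYu, Finset.mem_sdiff, hY0]
            exact ⟨Finset.mem_range.2 (by have := hvv_range w hwvv; omega),
              fun hc => hvvnu w hwvv (List.mem_toFinset.1 hc)⟩
        · exact Finset.mem_erase.2 ⟨by omega, Finset.mem_erase.2 ⟨by omega, h0Yu⟩⟩
        · exact Finset.mem_erase.2 ⟨by have := hz_range.2; omega,
            Finset.mem_erase.2 ⟨by have := hx_range.2; omega, hNYu⟩⟩
        · exact fun y hy => hYusub (Finset.mem_of_mem_erase (Finset.mem_of_mem_erase hy))
      obtain ⟨HT1, _, _⟩ := phiG_props n m ((Yu.erase x).erase z) hPre2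
      set T := phiG m ((Yu.erase x).erase z) with hT
      have hnotT : ∀ p q : ℕ, a ≤ p → q ≤ dd → (p, q) ∉ T := by
        intro p q hpa hqd hc
        obtain ⟨_, _, _, ⟨y, hy, _, hy1, hy2⟩, _, _⟩ := HT1 _ hc
        have hyYu : y ∈ Yu := Finset.mem_of_mem_erase (Finset.mem_of_mem_erase hy)
        rcases hcomb y hyYu (by omega) (by omega) with rfl | rfl
        · exact (Finset.mem_erase.1 (Finset.mem_of_mem_erase hy)).1 rfl
        · exact (Finset.mem_erase.1 hy).1 rfl
      -- compute the two images
      have hp1 : predIn (Yu.erase x) z = a := by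
        have haYu1 : a ∈ Yu.erase x := Finset.mem_erase.2 ⟨by omega, ha1⟩
        obtain ⟨hb1, hb2, hb3⟩ := predIn_spec (Y := Yu.erase x) (v := z) haYu1 (by omega)
        have h1 : a ≤ predIn (Yu.erase x) z := hb3 a haYu1 (by omega)
        have hbYu : predIn (Yu.erase x) z ∈ Yu := Finset.mem_of_mem_erase hb1
        rcases lt_or_eq_of_le h1 with h | h
        · rcases hcomb _ hbYu h (by omega) with heq | heq
          · exact absurd heq (Finset.mem_erase.1 hb1).1
          · omega
        · exact h.symm
      have hs1' : succIn (Yu.erase x) z = dd := by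
        have hdYu1 : dd ∈ Yu.erase x := Finset.mem_erase.2 ⟨by omega, hd1⟩
        obtain ⟨hb1, hb2, hb3⟩ := succIn_spec (Y := Yu.erase x) (v := z) hdYu1 hd2
        have h1 : succIn (Yu.erase x) z ≤ dd := hb3 dd hdYu1 hd2
        have hbYu : succIn (Yu.erase x) z ∈ Yu := Finset.mem_of_mem_erase hb1
        rcases lt_or_eq_of_le h1 with h | h
        · rcases hcomb _ hbYu (by omega) h with heq | heq
          · exact absurd heq (Finset.mem_erase.1 hb1).1
          · omega
        · exact h
      have hp2 : predIn (Yu.erase z) x = a := by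
        have haYu1 : a ∈ Yu.erase z := Finset.mem_erase.2 ⟨by omega, ha1⟩
        obtain ⟨hb1, hb2, hb3⟩ := predIn_spec (Y := Yu.erase z) (v := x) haYu1 ha2
        have h1 : a ≤ predIn (Yu.erase z) x := hb3 a haYu1 ha2
        have hbYu : predIn (Yu.erase z) x ∈ Yu := Finset.mem_of_mem_erase hb1
        rcases lt_or_eq_of_le h1 with h | h
        · exact absurd ⟨h, hb2⟩ (hgap_ax _ hbYu)
        · exact h.symm
      have hs2' : succIn (Yu.erase z) x = dd := by
        have hdYu1 : dd ∈ Yu.erase z := Finset.mem_erase.2 ⟨by omega, hd1⟩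
        obtain ⟨hb1, hb2, hb3⟩ := succIn_spec (Y := Yu.erase z) (v := x) hdYu1 (by omega)
        have h1 : succIn (Yu.erase z) x ≤ dd := hb3 dd hdYu1 (by omega)
        have hbYu : succIn (Yu.erase z) x ∈ Yu := Finset.mem_of_mem_erase hb1
        rcases lt_or_eq_of_le h1 with h | h
        · rcases hcomb _ hbYu (by omega) h with heq | heq
          · omega
          · exact absurd heq (Finset.mem_erase.1 hb1).1
        · exact h
      have hcomm : (Yu.erase z).erase x = (Yu.erase x).erase z := by
        ext y; simp only [Finset.mem_erase]; tauto
      have hD1 : phiT n (u ++ [x, z] ++ (m ++ [last])) = G0 ∪ insert (a, z) (insert (a, dd) T) := by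
        rw [phiT_decomp u x z hvvne, herase, hdrop]
        congr 1
        show insert (predIn Yu x, succIn Yu x)
          (insert (predIn (Yu.erase x) z, succIn (Yu.erase x) z) (phiG m ((Yu.erase x).erase z))) = _
        rw [hsx, hp1, hs1', ← ha, ← hT]
      have hD2 : phiT n (u ++ [z, x] ++ (m ++ [last])) = G0 ∪ insert (x, dd) (insert (a, dd) T) := by
        rw [phiT_decomp u z x hvvne, herase, hdrop]
        congr 1
        show insert (predIn Yu z, succIn Yu z)
          (insert (predIn (Yu.erase z) x, succIn (Yu.erase z) x) (phiG m ((Yu.erase z).erase x))) = _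
        rw [hpz, hp2, hs2', ← hdd, hcomm, ← hT]
      have hadT : (a, dd) ∈ insert (a, dd) T := Finset.mem_insert_self _ _
      have hEad1 : IsEdge n (phiT n (u ++ [x, z] ++ (m ++ [last]))) a dd := by
        refine ⟨by omega, hddle, Or.inr (Or.inr ?_)⟩
        rw [hD1]
        exact Finset.mem_union_right _ (Finset.mem_insert_of_mem hadT)
      have hEad2 : IsEdge n (phiT n (u ++ [z, x] ++ (m ++ [last]))) a dd := by
        refine ⟨by omega, hddle, Or.inr (Or.inr ?_)⟩
        rw [hD2]
        exact Finset.mem_union_right _ (Finset.mem_insert_of_mem hadT)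
      right
      refine flip_pair (by omega) hxz (by omega) hddle hEax hExz hEzd hD1 hD2 hEad1 hEad2
        hazG0 ?_ hxdG0 ?_
      · -- (a, z) ∉ insert (a, dd) T
        rw [Finset.mem_insert]
        rintro (hc | hc)
        · have : z = dd := by rw [Prod.ext_iff] at hc; exact hc.2
          omega
        · exact hnotT a z le_rfl (by omega) hc
      · -- (x, dd) ∉ insert (a, dd) T
        rw [Finset.mem_insert]
        rintro (hc | hc)
        · have : x = a := by rw [Prod.ext_iff] at hc; exact hc.1
          omega
        · exact hnotT x dd (by omega) le_rfl hc

/-- `φ` is a surjective graph morphism from the Cayley graph of `S_n` to the flip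
graph: it is surjective, and every edge of the Cayley graph (an adjacent
transposition) is mapped either to a single vertex or to an edge of the flip graph. -/
theorem stmt9 (n : ℕ) :
    (∀ D : Finset (ℕ × ℕ), IsTriangulation n D →
      ∃ l : List ℕ, l.Perm ((List.range n).map (· + 1)) ∧ phiT n l = D) ∧
    (∀ (u v : List ℕ) (x z : ℕ),
      (u ++ [x, z] ++ v).Perm ((List.range n).map (· + 1)) →
      phiT n (u ++ [x, z] ++ v) = phiT n (u ++ [z, x] ++ v) ∨
      FlipAdj n (phiT n (u ++ [x, z] ++ v)) (phiT n (u ++ [z, x] ++ v))) := by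
  constructor
  · exact part1 n
  · intro u v x z hperm
    have hassoc : u ++ [x, z] ++ v = u ++ x :: z :: v := by simp
    have hassoc' : u ++ [z, x] ++ v = u ++ z :: x :: v := by simp
    have hnd : (u ++ x :: z :: v).Nodup := by
      rw [← hassoc]
      exact hperm.nodup_iff.2 (std_list_nodup n)
    have hmem : ∀ w ∈ u ++ x :: z :: v, 1 ≤ w ∧ w ≤ n := by
      intro w hw
      rw [← hassoc] at hw
      exact std_list_mem.1 (hperm.mem_iff.1 hw)
    have hint : ∀ y, 1 ≤ y → y ≤ n → y ∈ u ++ x :: z :: v := by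
      intro y h1 h2
      rw [← hassoc]
      exact hperm.mem_iff.2 (std_list_mem.2 ⟨h1, h2⟩)
    rcases lt_trichotomy x z with h | h | h
    · rcases part2_core u v x z hnd hmem hint h with heq | ⟨hf, _⟩
      · exact Or.inl heq
      · exact Or.inr hf
    · subst h
      exact Or.inl rfl
    · have hswap : (x :: z :: v).Perm (z :: x :: v) := List.Perm.swap z x v
      have hperm2 : (u ++ [z, x] ++ v).Perm ((List.range n).map (· + 1)) := by
        rw [hassoc']
        exact ((List.Perm.append_left u hswap).symm).trans (hassoc ▸ hperm)
      have hnd2 : (u ++ z :: x :: v).Nodup := by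
        rw [← hassoc']
        exact hperm2.nodup_iff.2 (std_list_nodup n)
      have hmem2 : ∀ w ∈ u ++ z :: x :: v, 1 ≤ w ∧ w ≤ n := by
        intro w hw
        rw [← hassoc'] at hw
        exact std_list_mem.1 (hperm2.mem_iff.1 hw)
      have hint2 : ∀ y, 1 ≤ y → y ≤ n → y ∈ u ++ z :: x :: v := by
        intro y h1 h2
        rw [← hassoc']
        exact hperm2.mem_iff.2 (std_list_mem.2 ⟨h1, h2⟩)
      rcases part2_core u v z x hnd2 hmem2 hint2 h with heq | ⟨_, hf⟩
      · exact Or.inl heq.symm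
      · exact Or.inr hf
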